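/- There exists a constant c⁗ > 0 such that for all I ∈ {A, B}, all ν ∈ {1, 2, 3}, all z, y ∈ ℝ² with |z| < 0.33/√3 and |y| < 0.33/√3, and for every n = (n₁, n₂) ∈ ℤ² with n ≠ (0, 0), there exists l₀ ∈ {0, 1, 2, 3, 4, 5} with |z + n₁v₁ + n₂v₂ − y| − |z + e_{I,ν} − R₆₀^{l₀} y| ≥ c⁗ |n|, where |n| denotes the Euclidean norm of n. -/

import Mathlib

noncomputable section

open scoped Real

/-- The plane `ℝ²` with the Euclidean norm. -/
abbrev V2 : Type := EuclideanSpace ℝ (Fin 2)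

/-- The vector `(a, b) ∈ ℝ²`. -/
def vec (a b : ℝ) : V2 := WithLp.toLp 2 ![a, b]

/-- The dot product on `ℝ²`. -/
def dot (a b : V2) : ℝ := a 0 * b 0 + a 1 * b 1

/-- `v₁ = (√3/2, 1/2)`. -/
def v1 : V2 := vec (Real.sqrt 3 / 2) (1 / 2)

/-- `v₂ = (√3/2, −1/2)`. -/
def v2 : V2 := vec (Real.sqrt 3 / 2) (-(1 / 2))

/-- The lattice point `m₁ v₁ + m₂ v₂` of `Λ_h`. -/
def lat (m : ℤ × ℤ) : V2 := (m.1 : ℝ) • v1 + (m.2 : ℝ) • v2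

/-- `k₁ = 2π(1/√3, 1)`. -/
def dk1 : V2 := vec (2 * π / Real.sqrt 3) (2 * π)

/-- `k₂ = 2π(1/√3, −1)`. -/
def dk2 : V2 := vec (2 * π / Real.sqrt 3) (-(2 * π))

/-- The dual lattice point `m₁ k₁ + m₂ k₂` of `Λ_h*`. -/
def dlat (m : ℤ × ℤ) : V2 := (m.1 : ℝ) • dk1 + (m.2 : ℝ) • dk2

/-- `K = (0, 4π/3)`. -/
def KK : V2 := vec 0 (4 * π / 3)

/-- Clockwise rotation by `2π/3` about the origin (the matrix `R`). -/
def rotR (x : V2) : V2 :=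
  vec (-(1/2) * x 0 + (Real.sqrt 3 / 2) * x 1) (-(Real.sqrt 3 / 2) * x 0 - (1/2) * x 1)

/-- The transpose `Rᵀ`. -/
def rotRT (x : V2) : V2 :=
  vec (-(1/2) * x 0 - (Real.sqrt 3 / 2) * x 1) ((Real.sqrt 3 / 2) * x 0 - (1/2) * x 1)

/-- Clockwise rotation by `π/3` about the origin (the matrix `R₆₀`). -/
def rot60 (x : V2) : V2 :=
  vec ((1/2) * x 0 + (Real.sqrt 3 / 2) * x 1) (-(Real.sqrt 3 / 2) * x 0 + (1/2) * x 1)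

/-- `e_{A,1} = (1/√3, 0)`. -/
def eA1 : V2 := vec (1 / Real.sqrt 3) 0

/-- `e_{A,ν} = R^{ν−1} e_{A,1}` for `ν = 1, 2, 3` (indexed by `Fin 3`). -/
def eA (ν : Fin 3) : V2 := rotR^[(ν : ℕ)] eA1

/-- `e_{B,ν} = −e_{A,ν}`. -/
def eB (ν : Fin 3) : V2 := -eA ν

/-- `e_{I,ν}` for `I ∈ {A, B}` (`true ↦ A`, `false ↦ B`). -/
def eVec (I : Bool) (ν : Fin 3) : V2 := if I then eA ν else eB ν

/-- `γ(k) = Σ_{ν=1}^3 exp(i k·e_{B,ν})`. -/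
def gam (k : V2) : ℂ := ∑ ν : Fin 3, Complex.exp (Complex.I * (dot k (eB ν)))

/-- `W_TB(k) = |γ(k)|`. -/
def Wtb (k : V2) : ℝ := ‖gam k‖

/-- `v_B = (1/√3, 0)`. -/
def vB : V2 := vec (1 / Real.sqrt 3) 0

/-- The hexagon center `x_c = (1/(2√3), −1/2)`. -/
def xc : V2 := vec (1 / (2 * Real.sqrt 3)) (-(1 / 2))

/-- The rotation operator `ℛ[f](x) = f(x_c + Rᵀ(x − x_c))`. -/
def Rop (f : V2 → ℂ) (x : V2) : ℂ := f (xc + rotRT (x - xc))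

/-- `τ = exp(2πi/3)`. -/
def tau : ℂ := Complex.exp (2 * (π : ℂ) * Complex.I / 3)

/-- The Euclidean norm of an integer pair. -/
def znorm (m : ℤ × ℤ) : ℝ := Real.sqrt ((m.1 : ℝ) ^ 2 + (m.2 : ℝ) ^ 2)

/-- `N_bad(w) = {m ∈ ℤ² : |w + m₁v₁ + m₂v₂| = 1/√3}`. -/
def Nbad (w : V2) : Set (ℤ × ℤ) := {m | ‖w + lat m‖ = 1 / Real.sqrt 3}

/-- The `i`-th standard basis vector of `ℝ²`. -/
def basis2 (i : Fin 2) : V2 := EuclideanSpace.single i 1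

/-- Partial derivative `∂_i f` of a complex-valued function on `ℝ²`. -/
def pd (i : Fin 2) (f : V2 → ℂ) : V2 → ℂ := fun x => fderiv ℝ f x (basis2 i)

/-- The Laplacian `Δf = ∂₁²f + ∂₂²f` of a complex-valued function on `ℝ²`. -/
def lap (f : V2 → ℂ) (x : V2) : ℂ :=
  ∑ i : Fin 2, fderiv ℝ (fun y => fderiv ℝ f y (basis2 i)) x (basis2 i)

/-- The radial profile of the fundamental solution of `−Δ + 1` on `ℝ²`:
`𝒦(r) = (2π)⁻¹ e^{−r} ∫₀^∞ e^{−ζ} ζ^{−1/2} (2r + ζ)^{−1/2} dζ`. -/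
def Kker (r : ℝ) : ℝ :=
  (2 * π)⁻¹ * Real.exp (-r) *
    ∫ ζ in Set.Ioi (0 : ℝ), Real.exp (-ζ) * ζ ^ (-(1/2 : ℝ)) * (2 * r + ζ) ^ (-(1/2 : ℝ))


section Aux

lemma sqrt3_sq : Real.sqrt 3 ^ 2 = 3 := Real.sq_sqrt (by norm_num)

lemma nsq (x : V2) : ‖x‖^2 = x 0^2 + x 1^2 := by
  rw [EuclideanSpace.norm_eq, Real.sq_sqrt (by positivity)]
  simp [Fin.sum_univ_two, sq_abs]

lemma inner2 (x y : V2) : (inner ℝ x y : ℝ) = x 0 * y 0 + x 1 * y 1 := by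
  simp [PiLp.inner_apply, Fin.sum_univ_two]; ring

lemma rot60_neg' (x : V2) : rot60 (-x) = -rot60 x := by
  ext i; fin_cases i <;> show _ = -(_ : ℝ) <;> simp [rot60, vec] <;> ring

lemma rot60_iter_neg (l : ℕ) (x : V2) : rot60^[l] (-x) = -(rot60^[l] x) := by
  induction l generalizing x with
  | zero => rfl
  | succ n ih => rw [Function.iterate_succ_apply, Function.iterate_succ_apply, rot60_neg', ih]

lemma rot60_three (x : V2) : rot60^[3] x = -x := by
  have h := sqrt3_sq
  show rot60 (rot60 (rot60 x)) = -x
  ext i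
  fin_cases i <;> simp [rot60, vec]
  · linear_combination (-(3*x 0 + Real.sqrt 3 * x 1)/8) * h
  · linear_combination ((Real.sqrt 3 * x 0 - 3*x 1)/8) * h

lemma rot60_norm (x : V2) : ‖rot60 x‖ = ‖x‖ := by
  have h := sqrt3_sq
  rw [← Real.sqrt_sq (norm_nonneg (rot60 x)), ← Real.sqrt_sq (norm_nonneg x)]
  congr 1
  rw [nsq, nsq]
  show ((1/2) * x 0 + (Real.sqrt 3 / 2) * x 1)^2 + (-(Real.sqrt 3 / 2) * x 0 + (1/2) * x 1)^2 = _
  nlinarith [h]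

lemma rot60_iter_norm (l : ℕ) (x : V2) : ‖rot60^[l] x‖ = ‖x‖ := by
  induction l with
  | zero => rfl
  | succ n ih => rw [Function.iterate_succ_apply', rot60_norm, ih]

lemma rotR_norm (x : V2) : ‖rotR x‖ = ‖x‖ := by
  have h := sqrt3_sq
  rw [← Real.sqrt_sq (norm_nonneg (rotR x)), ← Real.sqrt_sq (norm_nonneg x)]
  congr 1
  rw [nsq, nsq]
  show (-(1/2) * x 0 + (Real.sqrt 3 / 2) * x 1)^2 + (-(Real.sqrt 3 / 2) * x 0 - (1/2) * x 1)^2 = _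
  nlinarith [h]

lemma rotR_iter_norm (l : ℕ) (x : V2) : ‖rotR^[l] x‖ = ‖x‖ := by
  induction l with
  | zero => rfl
  | succ n ih => rw [Function.iterate_succ_apply', rotR_norm, ih]

lemma eVec_norm (I : Bool) (ν : Fin 3) : ‖eVec I ν‖ = Real.sqrt 3 / 3 := by
  have h := sqrt3_sq
  have h1 : ‖eA1‖ = Real.sqrt 3 / 3 := by
    have h2 : ‖eA1‖^2 = (Real.sqrt 3/3)^2 := by
      rw [nsq]
      show (1/Real.sqrt 3)^2 + 0^2 = _
      have ht0 : Real.sqrt 3 ≠ 0 := by positivity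
      field_simp
      nlinarith [h]
    rw [← Real.sqrt_sq (norm_nonneg _), h2, Real.sqrt_sq (by positivity)]
  have h2 : ∀ ν : Fin 3, ‖eA ν‖ = Real.sqrt 3 / 3 := by
    intro ν; rw [eA, rotR_iter_norm, h1]
  cases I <;> simp [eVec, eB, h2]

lemma exists_good_rot (u y : V2) :
    ∃ l : Fin 6, Real.sqrt 3 / 2 * (‖u‖ * ‖y‖) ≤ (inner ℝ u (rot60^[(l:ℕ)] y) : ℝ) := by
  have h := sqrt3_sq
  set t := Real.sqrt 3 with htdef
  set M : ℝ := t / 2 * (‖u‖ * ‖y‖) with hMdef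
  have hMnn : 0 ≤ M := by positivity
  set p0 : ℝ := inner ℝ u y with hp0def
  set p1 : ℝ := inner ℝ u (rot60 y) with hp1def
  set p2 : ℝ := inner ℝ u (rot60 (rot60 y)) with hp2def
  have hco : ∀ x : V2, (inner ℝ u x : ℝ) = u 0 * x 0 + u 1 * x 1 := fun x => inner2 u x
  have hp0 : p0 = u 0 * y 0 + u 1 * y 1 := hco y
  have hp1c : p1 = u 0 * ((1/2) * y 0 + (t/2) * y 1) + u 1 * (-(t/2) * y 0 + (1/2) * y 1) := by
    rw [hp1def, hco]; rfl
  have hp2c : p2 = u 0 * ((1/2) * ((1/2) * y 0 + (t/2) * y 1) + (t/2) * (-(t/2) * y 0 + (1/2) * y 1))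
      + u 1 * (-(t/2) * ((1/2) * y 0 + (t/2) * y 1) + (1/2) * (-(t/2) * y 0 + (1/2) * y 1)) := by
    rw [hp2def, hco]; rfl
  have hnu := nsq u
  have hny := nsq y
  have hM2 : M^2 = p0^2 + p0*p2 + p2^2 := by
    rw [hMdef, mul_pow, mul_pow, hnu, hny, hp0, hp2c]
    linear_combination (((u 0 * y 0 + u 1 * y 1)^2)/4 - (t^2-3)*((u 0 * y 0 + u 1 * y 1)^2)/16
      + t*(u 0 * y 0 + u 1 * y 1)*(u 0 * y 1 - u 1 * y 0)/4) * h
  have hp1s : p1 = p0 + p2 := by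
    rw [hp1c, hp0, hp2c]
    linear_combination ((u 0 * y 0 + u 1 * y 1)/4) * h
  have key : M^2 ≤ p0^2 ∨ M^2 ≤ p1^2 ∨ M^2 ≤ p2^2 := by
    rcases le_total (p0*p2) 0 with hc | hc
    · rcases le_total (p2^2) (p0^2) with hd | hd
      · left
        have h1 : |p2| ≤ |p0| := by
          rw [← Real.sqrt_sq_eq_abs, ← Real.sqrt_sq_eq_abs]; exact Real.sqrt_le_sqrt hd
        have h2 : p2^2 + p0*p2 ≤ 0 := by
          have e1 : p2^2 ≤ |p0| * |p2| := by
            rw [← sq_abs p2, sq]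
            exact mul_le_mul_of_nonneg_right h1 (abs_nonneg _)
          have e2 : |p0| * |p2| = -(p0*p2) := by
            rw [← abs_mul, abs_of_nonpos hc]
          linarith
        linarith [hM2]
      · right; right
        have h1 : |p0| ≤ |p2| := by
          rw [← Real.sqrt_sq_eq_abs, ← Real.sqrt_sq_eq_abs]; exact Real.sqrt_le_sqrt hd
        have h2 : p0^2 + p0*p2 ≤ 0 := by
          have e1 : p0^2 ≤ |p0| * |p2| := by
            rw [← sq_abs p0, sq]
            exact mul_le_mul_of_nonneg_left h1 (abs_nonneg _)
          have e2 : |p0| * |p2| = -(p0*p2) := by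
            rw [← abs_mul, abs_of_nonpos hc]
          linarith
        linarith [hM2]
    · right; left
      rw [hp1s]; nlinarith [hM2]
  have hneg : ∀ l : ℕ, (inner ℝ u (rot60^[l+3] y) : ℝ) = - inner ℝ u (rot60^[l] y) := by
    intro l
    rw [Function.iterate_add_apply, rot60_three, rot60_iter_neg, inner_neg_right]
  have final : ∀ l : Fin 3, M^2 ≤ (inner ℝ u (rot60^[(l:ℕ)] y) : ℝ)^2 →
      ∃ l₀ : Fin 6, M ≤ (inner ℝ u (rot60^[(l₀:ℕ)] y) : ℝ) := by
    intro l hl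
    set p : ℝ := inner ℝ u (rot60^[(l:ℕ)] y) with hpdef
    have habs : M ≤ |p| := by nlinarith [abs_nonneg p, sq_abs p]
    rcases le_total 0 p with hp | hp
    · exact ⟨⟨(l:ℕ), by omega⟩, by rw [abs_of_nonneg hp] at habs; exact habs⟩
    · refine ⟨⟨(l:ℕ)+3, by omega⟩, ?_⟩
      show M ≤ (inner ℝ u (rot60^[(l:ℕ)+3] y) : ℝ)
      rw [hneg]
      rw [abs_of_nonpos hp] at habs
      exact habs
  rcases key with hk | hk | hk
  · exact final 0 hk
  · exact final 1 hk
  · exact final 2 hk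

lemma tbounds (t : ℝ) (ht : t^2 = 3) (ht0 : 0 < t) : 1.732 ≤ t ∧ t ≤ 1.7321 := by
  constructor <;> nlinarith

lemma scalarA (t s b a f N : ℝ) (ht : t^2 = 3) (ht0 : 0 < t)
    (hs : 0 ≤ s) (hb : 0 ≤ b) (hst : s*t ≤ 0.33) (hbt : b*t ≤ 0.33)
    (ha0 : 0 ≤ a) (hat : 3*a ≤ 3*s + t) (hf0 : 0 ≤ f) (hf : f^2 ≤ a^2 - t*a*b + b^2)
    (hN : N ≤ t) :
    N/250 ≤ (1 - s - b) - f := by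
  obtain ⟨ht1, ht2⟩ := tbounds t ht ht0
  have hs1 : s ≤ 0.1906 := by nlinarith
  have hb1 : b ≤ 0.1906 := by nlinarith
  have h1 : f^2 ≤ (s + t/3)^2 - t*(s + t/3)*b + b^2 := by
    nlinarith [mul_nonneg (sub_nonneg.2 (by linarith : a ≤ s + t/3)) (by nlinarith : 0 ≤ s + t/3 + a - t*b)]
  have h2 : f^2 ≤ (1 - s - b - 0.007)^2 := by
    nlinarith [mul_nonneg (sub_nonneg.2 hs1) (sub_nonneg.2 hb1),
      mul_nonneg (mul_nonneg hs hb) (sub_nonneg.2 ht1), hst, hbt, mul_nonneg hs hb]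
  have hR : (0:ℝ) ≤ 1 - s - b - 0.007 := by linarith
  have h3 : f ≤ 1 - s - b - 0.007 := by
    rw [← Real.sqrt_sq hf0, ← Real.sqrt_sq hR]
    exact Real.sqrt_le_sqrt h2
  nlinarith

lemma scalarB (t s b a f N L : ℝ) (ht : t^2 = 3) (ht0 : 0 < t)
    (hs : 0 ≤ s) (hb : 0 ≤ b) (hst : s*t ≤ 0.33) (hbt : b*t ≤ 0.33)
    (ha0 : 0 ≤ a) (hat : 3*a ≤ 3*s + t) (hf0 : 0 ≤ f) (hf : f ≤ a + b)
    (hL0 : 0 ≤ L) (hL : N^2 ≤ 2*L^2) (hN : 2 ≤ N) :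
    N/250 ≤ (L - s - b) - f := by
  obtain ⟨ht1, ht2⟩ := tbounds t ht ht0
  have hs1 : s ≤ 0.1906 := by nlinarith
  have hb1 : b ≤ 0.1906 := by nlinarith
  have hL1 : 0.707 * N ≤ L := by nlinarith
  nlinarith

end Aux

set_option maxHeartbeats 1000000 in
lemma statement13_aux (I : Bool) (ν : Fin 3) (z y : V2)
    (hz : ‖z‖ < 0.33 / Real.sqrt 3) (hy : ‖y‖ < 0.33 / Real.sqrt 3)
    (n : ℤ × ℤ) (hn : n ≠ (0, 0)) : ∃ l₀ : Fin 6,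
    (1/250 : ℝ) * znorm n ≤ ‖z + lat n - y‖ - ‖z + eVec I ν - rot60^[(l₀ : ℕ)] y‖ := by
  have ht := sqrt3_sq
  have ht0 : 0 < Real.sqrt 3 := Real.sqrt_pos.mpr (by norm_num)
  set t := Real.sqrt 3 with htdef
  -- basic quantities
  set s := ‖z‖ with hsdef
  set b := ‖y‖ with hbdef
  have hs0 : 0 ≤ s := norm_nonneg _
  have hb0 : 0 ≤ b := norm_nonneg _
  have hst : s * t ≤ 0.33 := le_of_lt ((lt_div_iff₀ ht0).mp hz)
  have hbt : b * t ≤ 0.33 := le_of_lt ((lt_div_iff₀ ht0).mp hy)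
  -- norm of eVec
  have he : ‖eVec I ν‖ = t / 3 := eVec_norm I ν
  set e := eVec I ν with hedef
  set a := ‖z + e‖ with hadef
  have ha0 : 0 ≤ a := norm_nonneg _
  have hat : 3*a ≤ 3*s + t := by
    have := norm_add_le z e
    rw [he] at this
    rw [hadef]
    linarith
  -- choose the rotation
  obtain ⟨l₀, hl₀⟩ := exists_good_rot (z + e) y
  refine ⟨l₀, ?_⟩
  set w := rot60^[(l₀:ℕ)] y with hwdef
  have hw : ‖w‖ = b := rot60_iter_norm _ _
  set f := ‖z + e - w‖ with hfdef
  have hf0 : 0 ≤ f := norm_nonneg _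
  have hfsq : f^2 ≤ a^2 - t*a*b + b^2 := by
    have h1 : f^2 = a^2 - 2*(inner ℝ (z+e) w : ℝ) + ‖w‖^2 := norm_sub_sq_real _ _
    rw [hw] at h1
    have h2 : t/2 * (a*b) ≤ (inner ℝ (z+e) w : ℝ) := hl₀
    nlinarith
  have hfub : f ≤ a + b := by
    have := norm_sub_le (z + e) w
    rw [hw] at this
    exact this
  -- lattice norm
  set L := ‖lat n‖ with hLdef
  have hL0 : 0 ≤ L := norm_nonneg _
  have hl0c : lat n 0 = (n.1:ℝ) * (t/2) + (n.2:ℝ) * (t/2) := rfl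
  have hl1c : lat n 1 = (n.1:ℝ) * (1/2) + (n.2:ℝ) * (-(1/2)) := rfl
  have hL2 : L^2 = (n.1:ℝ)^2 + (n.2:ℝ)^2 + (n.1:ℝ)*(n.2:ℝ) := by
    rw [hLdef, nsq, hl0c, hl1c]
    linear_combination (((n.1:ℝ)+(n.2:ℝ))^2/4) * ht
  have hm : (1:ℝ) ≤ (n.1:ℝ)^2 + (n.2:ℝ)^2 + (n.1:ℝ)*(n.2:ℝ) := by
    have hmz : (1:ℤ) ≤ n.1^2 + n.2^2 + n.1*n.2 := by
      rcases eq_or_ne n.2 0 with h2 | h2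
      · have h1 : n.1 ≠ 0 := by
          intro h1; exact hn (Prod.ext_iff.mpr ⟨h1, h2⟩)
        have : 1 ≤ n.1^2 := by
          rcases h1.lt_or_gt with h | h <;> nlinarith
        have h2' : n.2 = 0 := h2
        nlinarith
      · have h22 : 1 ≤ n.2^2 := by
          rcases h2.lt_or_gt with h | h <;> nlinarith
        nlinarith [sq_nonneg (2*n.1 + n.2)]
    exact_mod_cast hmz
  have hLge1 : 1 ≤ L := by nlinarith
  -- znorm facts
  set N := znorm n with hNdef
  have hN0 : 0 ≤ N := Real.sqrt_nonneg _
  have hNsq : N^2 = (n.1:ℝ)^2 + (n.2:ℝ)^2 := Real.sq_sqrt (by positivity)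
  have hNL : N^2 ≤ 2*L^2 := by nlinarith [sq_nonneg ((n.1:ℝ) + (n.2:ℝ))]
  -- lower bound for the first norm
  have hlow : L - s - b ≤ ‖z + lat n - y‖ := by
    have e1 : z + lat n - y = lat n - (y - z) := by abel
    rw [e1]
    have h1 := norm_sub_norm_le (lat n) (y - z)
    have h2 := norm_sub_le y z
    rw [hsdef, hbdef]
    rw [hLdef]
    linarith
  -- case split on the size of n
  rcases le_or_gt (n.1^2 + n.2^2) 3 with hq | hq
  · have hq' : ((n.1:ℝ)^2 + (n.2:ℝ)^2) ≤ 3 := by exact_mod_cast hq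
    have hNle : N ≤ t := by
      have : N = Real.sqrt ((n.1:ℝ)^2 + (n.2:ℝ)^2) := rfl
      rw [this, htdef]
      exact Real.sqrt_le_sqrt hq'
    have key := scalarA t s b a f N ht ht0 hs0 hb0 hst hbt ha0 hat hf0 hfsq hNle
    have : (1:ℝ)/250 * N = N/250 := by ring
    rw [this]
    linarith
  · have hq2 : (4:ℤ) ≤ n.1^2 + n.2^2 := hq
    have hq' : (4:ℝ) ≤ (n.1:ℝ)^2 + (n.2:ℝ)^2 := by exact_mod_cast hq2
    have hN2 : 2 ≤ N := by nlinarith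
    have key := scalarB t s b a f N L ht ht0 hs0 hb0 hst hbt ha0 hat hf0 hfub hL0 hNL hN2
    have : (1:ℝ)/250 * N = N/250 := by ring
    rw [this]
    linarith

/-- (Geometric Lemma, part 4.) There is `c⁗ > 0` so that for all
`I, ν`, all `z, y` with `|z|, |y| < 0.33/√3` and every `n ∈ ℤ²`, `n ≠ (0,0)`,
some `l₀ ∈ {0,…,5}` satisfies
`|z + n₁v₁ + n₂v₂ − y| − |z + e_{I,ν} − R₆₀^{l₀} y| ≥ c⁗ |n|`. -/
theorem statement13 :
    ∃ c'''' : ℝ, 0 < c'''' ∧ ∀ (I : Bool) (ν : Fin 3) (z y : V2),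
      ‖z‖ < 0.33 / Real.sqrt 3 → ‖y‖ < 0.33 / Real.sqrt 3 →
      ∀ n : ℤ × ℤ, n ≠ (0, 0) → ∃ l₀ : Fin 6,
        c'''' * znorm n ≤ ‖z + lat n - y‖ - ‖z + eVec I ν - rot60^[(l₀ : ℕ)] y‖ := by
  exact ⟨1/250, by norm_num, fun I ν z y hz hy n hn => statement13_aux I ν z y hz hy n hn⟩
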